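/- The improper Riemann integral ∫₀^∞ sin(τ³/3)·τ^{−1} dτ, i.e. the limit lim_{T→∞} ∫₀^T sin(τ³/3)/τ dτ, exists and equals π/6. -/

import Mathlib

open Real Filter


open MeasureTheory Set intervalIntegral

noncomputable def msinc (x : ℝ) : ℝ := if x = 0 then 1 else Real.sin x / x

lemma msinc_cont : Continuous msinc := by
  rw [continuous_iff_continuousAt]
  intro x
  rcases eq_or_ne x 0 with rfl | hx
  · have h1 : Tendsto (slope Real.sin 0) (nhdsWithin 0 {0}ᶜ) (nhds 1) := by
      have := hasDerivAt_iff_tendsto_slope.mp (Real.hasDerivAt_sin 0)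
      simpa using this
    have h2 : Tendsto msinc (nhdsWithin 0 {0}ᶜ) (nhds 1) := by
      refine h1.congr' ?_
      filter_upwards [self_mem_nhdsWithin] with y hy
      simp only [Set.mem_compl_iff, Set.mem_singleton_iff] at hy
      simp [slope, msinc, hy, div_eq_inv_mul]
    have h3 : Tendsto msinc (pure 0) (nhds 1) := by
      simpa [msinc] using tendsto_pure_nhds msinc 0
    have : Tendsto msinc (nhdsWithin 0 {0}ᶜ ⊔ pure 0) (nhds 1) := h2.sup h3
    rw [nhdsNE_sup_pure] at this
    unfold ContinuousAt
    simpa [msinc] using this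
  · have : ContinuousAt (fun y => Real.sin y / y) x :=
      (Real.continuous_sin.continuousAt).div continuousAt_id hx
    refine this.congr ?_
    filter_upwards [isOpen_compl_singleton.mem_nhds hx] with y hy
    simp only [Set.mem_compl_iff, Set.mem_singleton_iff] at hy
    simp [msinc, hy]

lemma intervalIntegrable_sin_div (a b : ℝ) :
    IntervalIntegrable (fun u => Real.sin u / u) volume a b := by
  have h : IntervalIntegrable msinc volume a b := msinc_cont.intervalIntegrable a b
  refine h.congr_ae ?_
  have h0 : ∀ᵐ (y : ℝ), y ≠ 0 := by
    rw [ae_iff]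
    simpa using Real.volume_singleton (0:ℝ)
  filter_upwards [ae_restrict_of_ae h0] with y hy
  simp [msinc, hy]


lemma kernel_id (n : ℕ) (t : ℝ) :
    Real.sin ((n + 1/2) * t) =
      Real.sin (t/2) * (1 + 2 * ∑ k ∈ Finset.range n, Real.cos ((k+1) * t)) := by
  induction n with
  | zero => simp; ring_nf
  | succ n ih =>
    have key : Real.sin ((n + 1 + 1/2) * t) - Real.sin ((n + 1/2) * t)
        = 2 * Real.sin (t/2) * Real.cos ((n+1) * t) := by
      rw [Real.sin_sub_sin]
      ring_nf
    rw [Finset.sum_range_succ]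
    push_cast
    nlinarith [key, ih]

lemma integral_kernel (n : ℕ) :
    ∫ t in (0:ℝ)..π, (1/2 + ∑ k ∈ Finset.range n, Real.cos ((k+1) * t)) = π/2 := by
  have hint : ∀ k : ℕ, IntervalIntegrable (fun t => Real.cos ((k+1) * t)) volume 0 π := by
    intro k
    exact (Real.continuous_cos.comp (continuous_const.mul continuous_id)).intervalIntegrable 0 π
  have hsum : IntervalIntegrable (fun t => ∑ k ∈ Finset.range n, Real.cos ((k+1) * t)) volume 0 π :=
    Continuous.intervalIntegrable (by fun_prop) 0 π
  rw [intervalIntegral.integral_add intervalIntegrable_const hsum]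
  have h1 : ∫ t in (0:ℝ)..π, (1/2 : ℝ) = π/2 := by simp; ring
  have h2 : ∀ k : ℕ, (∫ t in (0:ℝ)..π, Real.cos ((k+1) * t)) = 0 := by
    intro k
    have hc : ((k:ℝ)+1) ≠ 0 := by positivity
    rw [intervalIntegral.integral_comp_mul_left (fun u => Real.cos u) hc]
    simp only [mul_zero, integral_cos, Real.sin_zero, sub_zero, smul_eq_mul]
    have : ((k:ℝ)+1) * π = ((k+1 : ℕ) : ℝ) * π := by push_cast; ring
    rw [this, Real.sin_nat_mul_pi, mul_zero]
  rw [intervalIntegral.integral_finset_sum (fun k _ => hint k)]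
  simp [h1, h2]
  ring


lemma sin_ge_sub_cube {x : ℝ} (hx : 0 ≤ x) : x - x^3/6 ≤ Real.sin x := by
  have h1 : (∫ t in (0:ℝ)..x, (1 - t^2/2)) ≤ ∫ t in (0:ℝ)..x, Real.cos t := by
    apply intervalIntegral.integral_mono_on hx
    · exact Continuous.intervalIntegrable (by fun_prop) 0 x
    · exact Real.continuous_cos.intervalIntegrable 0 x
    · intro t _
      exact Real.one_sub_sq_div_two_le_cos
  have h2 : (∫ t in (0:ℝ)..x, (1 - t^2/2)) = x - x^3/6 := by
    rw [intervalIntegral.integral_sub (Continuous.intervalIntegrable (by fun_prop) 0 x)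
      (Continuous.intervalIntegrable (by fun_prop) 0 x)]
    simp [intervalIntegral.integral_div, integral_pow]
    ring
  rw [h2, integral_cos] at h1
  simpa using h1

noncomputable def phi (t : ℝ) : ℝ := 1/t - 1/(2 * Real.sin (t/2))

lemma phi_bound {t : ℝ} (ht : t ∈ Set.Ioc (0:ℝ) π) : |phi t| ≤ π^2/48 := by
  obtain ⟨ht0, htπ⟩ := ht
  have hs2 : t/2 ≤ π/2 := by linarith
  have hs0 : 0 < t/2 := by linarith
  have hsinpos : 0 < Real.sin (t/2) := Real.sin_pos_of_pos_of_lt_pi hs0 (lt_of_le_of_lt hs2 (by linarith [Real.pi_pos]))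
  have hjordan : 2/π * (t/2) ≤ Real.sin (t/2) := Real.mul_le_sin (le_of_lt hs0) hs2
  have hup : Real.sin (t/2) ≤ t/2 := Real.sin_le (le_of_lt hs0)
  have hlow : t/2 - (t/2)^3/6 ≤ Real.sin (t/2) := _root_.sin_ge_sub_cube (le_of_lt hs0)
  have hphi : phi t = (2 * Real.sin (t/2) - t) / (t * (2 * Real.sin (t/2))) := by
    unfold phi
    field_simp
  rw [hphi, abs_div]
  have hnum : |2 * Real.sin (t/2) - t| ≤ t^3/24 := by
    rw [abs_le]
    constructor
    · nlinarith
    · nlinarith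
  have hden : t * (2/π) * t ≤ t * (2 * Real.sin (t/2)) := by nlinarith
  have hdenpos : 0 < t * (2 * Real.sin (t/2)) := by positivity
  rw [abs_of_pos hdenpos]
  have hπ := Real.pi_pos
  calc |2 * Real.sin (t/2) - t| / (t * (2 * Real.sin (t/2)))
      ≤ (t^3/24) / (t * (2/π) * t) := by
        apply div_le_div₀ (by positivity) hnum (by positivity) hden
    _ = π * t / 48 := by field_simp; ring
    _ ≤ π^2/48 := by nlinarith



lemma phi_meas : Measurable phi := by
  unfold phi
  fun_prop

lemma phi_integrableOn : IntegrableOn phi (Set.Ioc 0 π) := by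
  refine Measure.integrableOn_of_bounded (M := π^2/48) measure_Ioc_lt_top.ne
    phi_meas.aestronglyMeasurable ?_
  filter_upwards [ae_restrict_mem measurableSet_Ioc] with t ht
  simpa [Real.norm_eq_abs] using phi_bound ht

lemma char_smul_im (θ c : ℝ) : (Real.fourierChar θ • (c:ℂ)).im = Real.sin (2*π*θ) * c := by
  rw [Circle.smul_def, Real.fourierChar_apply, Complex.exp_mul_I, smul_eq_mul, Complex.mul_im]
  simp [Complex.add_im, Complex.add_re, Complex.mul_im, Complex.mul_re,
    Complex.cos_ofReal_im, Complex.sin_ofReal_re, Complex.cos_ofReal_re, Complex.sin_ofReal_im]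
  left
  rw [show (2 * (π:ℂ) * (θ:ℂ)) = ((2*π*θ:ℝ):ℂ) from by push_cast; ring,
    Complex.cos_ofReal_im, Complex.sin_ofReal_re]
  ring

lemma tendsto_RL :
    Tendsto (fun n : ℕ => ∫ t in Set.Ioc (0:ℝ) π, Real.sin (((n:ℝ) + 1/2) * t) * phi t)
      atTop (nhds 0) := by
  set f : ℝ → ℂ := (Set.Ioc (0:ℝ) π).indicator (fun t => (phi t : ℂ)) with hf
  have hw : Tendsto (fun n : ℕ => ((n : ℝ) + 1/2) / (2 * π)) atTop atTop := by
    apply Tendsto.atTop_div_const (by positivity)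
    exact tendsto_atTop_add_const_right _ _ tendsto_natCast_atTop_atTop
  have hco : Tendsto (fun n : ℕ => ((n : ℝ) + 1/2) / (2 * π)) atTop (cocompact ℝ) :=
    hw.mono_right (by rw [cocompact_eq_atBot_atTop]; exact le_sup_right)
  have hRL := (Real.tendsto_integral_exp_smul_cocompact f).comp hco
  have him := (Complex.continuous_im.tendsto 0).comp hRL
  simp only [Complex.zero_im, Function.comp_def] at him
  have key : ∀ n : ℕ,
      (∫ v : ℝ, Real.fourierChar (-(v * (((n : ℝ) + 1/2) / (2 * π)))) • f v).im
        = -∫ t in Set.Ioc (0:ℝ) π, Real.sin (((n:ℝ) + 1/2) * t) * phi t := by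
    intro n
    set w : ℝ := ((n : ℝ) + 1/2) / (2 * π) with hwdef
    have hmeas : MeasurableSet (Set.Ioc (0:ℝ) π) := measurableSet_Ioc
    have h1 : (fun v : ℝ => Real.fourierChar (-(v * w)) • f v)
        = (Set.Ioc (0:ℝ) π).indicator
            (fun v => Real.fourierChar (-(v * w)) • (phi v : ℂ)) := by
      ext v
      rw [hf]
      by_cases hv : v ∈ Set.Ioc (0:ℝ) π <;>
        simp [Set.indicator_of_mem, Set.indicator_of_notMem, hv]
    rw [h1, MeasureTheory.integral_indicator hmeas]
    have hInt : Integrable (fun v => Real.fourierChar (-(v * w)) • (phi v : ℂ))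
        (volume.restrict (Set.Ioc (0:ℝ) π)) := by
      apply Integrable.mono' (g := fun v => |phi v|) phi_integrableOn.abs
      · have hc : Continuous fun v : ℝ => Real.fourierChar (-(v * w)) :=
          Real.continuous_fourierChar.comp (by fun_prop)
        exact hc.aestronglyMeasurable.smul
          (Complex.measurable_ofReal.comp phi_meas).aestronglyMeasurable
      · filter_upwards with v
        simp [norm_smul, Real.norm_eq_abs]
    have him2 := integral_im (𝕜 := ℂ) hInt
    simp only [RCLike.im_to_complex] at him2
    rw [← him2, ← MeasureTheory.integral_neg]
    apply setIntegral_congr_fun hmeas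
    intro t _
    have hπ := Real.pi_ne_zero
    show (Real.fourierChar (-(t * w)) • ((phi t : ℝ) : ℂ)).im
      = -(Real.sin (((n:ℝ) + 1/2) * t) * phi t)
    rw [char_smul_im]
    have harg : 2 * π * (-(t * w)) = -((((n:ℝ)) + 1/2) * t) := by
      rw [hwdef]; field_simp
    rw [harg, Real.sin_neg]
    ring
  simp only [key] at him
  have := him.neg
  simpa using this



lemma sin_half_pos {t : ℝ} (ht : t ∈ Set.Ioc (0:ℝ) π) : 0 < Real.sin (t/2) := by
  obtain ⟨h0, h1⟩ := ht
  exact Real.sin_pos_of_pos_of_lt_pi (by linarith) (by linarith [Real.pi_pos])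

lemma step2 (n : ℕ) :
    ∫ t in (0:ℝ)..π, Real.sin (((n:ℝ) + 1/2) * t) / t
      = π/2 + ∫ t in Set.Ioc (0:ℝ) π, Real.sin (((n:ℝ) + 1/2) * t) * phi t := by
  have h0π : (0:ℝ) ≤ π := Real.pi_pos.le
  have hmeas : MeasurableSet (Set.Ioc (0:ℝ) π) := measurableSet_Ioc
  rw [intervalIntegral.integral_of_le h0π]
  have hker : IntegrableOn (fun t => Real.sin (((n:ℝ) + 1/2) * t) / (2 * Real.sin (t/2)))
      (Set.Ioc 0 π) := by
    have hcont : Continuous (fun t : ℝ => 1/2 + ∑ k ∈ Finset.range n, Real.cos ((k+1) * t)) := by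
      fun_prop
    refine (hcont.integrableOn_Ioc).congr_fun ?_ hmeas
    intro t ht
    have hs := sin_half_pos ht
    beta_reduce
    rw [kernel_id n t]
    field_simp
    exact congrArg (fun s => 1 + 2 * s) (Finset.sum_congr rfl fun k _ => congrArg Real.cos (by ring))
  have hphi2 : IntegrableOn (fun t => Real.sin (((n:ℝ) + 1/2) * t) * phi t) (Set.Ioc 0 π) := by
    apply Integrable.bdd_mul (c := 1) phi_integrableOn
    · exact (Continuous.aestronglyMeasurable (by fun_prop))
    · exact Filter.Eventually.of_forall (fun t => by simpa [Real.norm_eq_abs] using Real.abs_sin_le_one _)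
  have hsplit : ∫ t in Set.Ioc (0:ℝ) π, Real.sin (((n:ℝ) + 1/2) * t) / t
      = (∫ t in Set.Ioc (0:ℝ) π, Real.sin (((n:ℝ) + 1/2) * t) / (2 * Real.sin (t/2)))
        + ∫ t in Set.Ioc (0:ℝ) π, Real.sin (((n:ℝ) + 1/2) * t) * phi t := by
    rw [← MeasureTheory.integral_add hker hphi2]
    apply setIntegral_congr_fun hmeas
    intro t ht
    have hs := sin_half_pos ht
    have ht0 : (0:ℝ) < t := ht.1
    unfold phi
    field_simp
    ring
  rw [hsplit]
  congr 1
  have : ∫ t in Set.Ioc (0:ℝ) π, Real.sin (((n:ℝ) + 1/2) * t) / (2 * Real.sin (t/2))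
      = ∫ t in Set.Ioc (0:ℝ) π, (1/2 + ∑ k ∈ Finset.range n, Real.cos ((k+1) * t)) := by
    apply setIntegral_congr_fun hmeas
    intro t ht
    have hs := sin_half_pos ht
    beta_reduce
    rw [kernel_id n t]
    field_simp
  rw [this, ← intervalIntegral.integral_of_le h0π, integral_kernel]

lemma step1 {lam : ℝ} (hl : 0 < lam) :
    ∫ t in (0:ℝ)..π, Real.sin (lam * t) / t = ∫ u in (0:ℝ)..(lam * π), Real.sin u / u := by
  have h := intervalIntegral.integral_comp_mul_left (fun u => Real.sin u / u) hl.ne' (a := 0) (b := π)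
  simp only [mul_zero] at h
  have h2 : (fun t => Real.sin (lam * t) / t) = fun t => lam * (Real.sin (lam * t) / (lam * t)) := by
    ext t
    rcases eq_or_ne t 0 with rfl | ht
    · simp
    · field_simp
  rw [h2]
  rw [intervalIntegral.integral_const_mul, h, smul_eq_mul, ← mul_assoc,
    mul_inv_cancel₀ hl.ne', one_mul]


lemma cos_div_sq_integrable : IntegrableOn (fun x : ℝ => (x^2)⁻¹ * Real.cos x) (Set.Ioi π) := by
  have hπ := Real.pi_pos
  have hg : IntegrableOn (fun x : ℝ => x ^ (-2 : ℝ)) (Set.Ioi π) :=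
    (integrableOn_Ioi_rpow_iff hπ).2 (by norm_num)
  apply Integrable.mono' hg
  · have : Measurable fun x : ℝ => (x^2)⁻¹ * Real.cos x :=
      ((measurable_id.pow_const 2).inv).mul Real.measurable_cos
    exact this.aestronglyMeasurable.restrict
  · filter_upwards [ae_restrict_mem measurableSet_Ioi] with x hx
    have hx0 : 0 < x := hπ.trans hx
    have h1 : x ^ (-2 : ℝ) = (x^2)⁻¹ := by
      rw [Real.rpow_neg hx0.le, ← Real.rpow_natCast x 2]
      norm_num
    rw [h1, norm_mul, norm_inv]
    have : ‖Real.cos x‖ ≤ 1 := by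
      rw [Real.norm_eq_abs]; exact Real.abs_cos_le_one x
    calc ‖x^2‖⁻¹ * ‖Real.cos x‖ ≤ ‖x^2‖⁻¹ * 1 := by
          apply mul_le_mul_of_nonneg_left this (by positivity)
      _ = (x^2)⁻¹ := by rw [mul_one, Real.norm_eq_abs, abs_of_pos (by positivity)]

lemma dirichlet_limit_exists :
    ∃ L : ℝ, Tendsto (fun S : ℝ => ∫ u in (0:ℝ)..S, Real.sin u / u) atTop (nhds L) := by
  have hπ := Real.pi_pos
  set G : ℝ := ∫ x in Set.Ioi π, (x^2)⁻¹ * Real.cos x with hG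
  set Fπ : ℝ := ∫ u in (0:ℝ)..π, Real.sin u / u with hFπ
  refine ⟨Fπ + π⁻¹ * Real.cos π - G, ?_⟩
  have key : ∀ S : ℝ, π ≤ S →
      (∫ u in (0:ℝ)..S, Real.sin u / u)
        = Fπ + (S⁻¹ * (-Real.cos S) - π⁻¹ * (-Real.cos π)
            - ∫ x in π..S, (x^2)⁻¹ * Real.cos x) := by
    intro S hS
    have hsplit : (∫ u in (0:ℝ)..π, Real.sin u / u) + (∫ u in π..S, Real.sin u / u)
        = ∫ u in (0:ℝ)..S, Real.sin u / u :=
      intervalIntegral.integral_add_adjacent_intervals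
        (intervalIntegrable_sin_div 0 π) (intervalIntegrable_sin_div π S)
    have hpos : ∀ x ∈ Set.uIcc π S, x ≠ 0 := by
      intro x hx
      rw [Set.uIcc_of_le hS] at hx
      exact (lt_of_lt_of_le hπ hx.1).ne'
    have hIBP : ∫ x in π..S, x⁻¹ * Real.sin x
        = S⁻¹ * (-Real.cos S) - π⁻¹ * (-Real.cos π)
          - ∫ x in π..S, (-(x^2)⁻¹) * (-Real.cos x) := by
      apply intervalIntegral.integral_mul_deriv_eq_deriv_mul
        (u := fun x => x⁻¹) (u' := fun x => -(x^2)⁻¹)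
        (v := fun x => -Real.cos x) (v' := fun x => Real.sin x)
      · intro x hx
        exact hasDerivAt_inv (hpos x hx)
      · intro x hx
        have := (Real.hasDerivAt_cos x).neg; rw [neg_neg] at this; exact this
      · apply ContinuousOn.intervalIntegrable
        intro x hx
        exact ((continuousOn_inv₀.comp (continuousOn_pow 2) (fun y hy => pow_ne_zero 2 (hpos y hy))).neg) x hx
      · exact Real.continuous_sin.intervalIntegrable π S
    have e1 : (∫ u in π..S, Real.sin u / u) = ∫ x in π..S, x⁻¹ * Real.sin x := by
      apply intervalIntegral.integral_congr
      intro x _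
      simp [div_eq_inv_mul]
    have e2 : (∫ x in π..S, (-(x^2)⁻¹) * (-Real.cos x)) = ∫ x in π..S, (x^2)⁻¹ * Real.cos x := by
      apply intervalIntegral.integral_congr
      intro x _
      ring
    rw [← hsplit, e1, hIBP, e2, hFπ]
  have h1 : Tendsto (fun S : ℝ => S⁻¹ * (-Real.cos S)) atTop (nhds 0) := by
    apply squeeze_zero_norm' (a := fun S : ℝ => S⁻¹) ?_ tendsto_inv_atTop_zero
    · filter_upwards [eventually_ge_atTop (1:ℝ)] with S hS
      rw [norm_mul, norm_inv, norm_neg, Real.norm_eq_abs, Real.norm_eq_abs,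
        abs_of_pos (by linarith)]
      calc S⁻¹ * |Real.cos S| ≤ S⁻¹ * 1 :=
            mul_le_mul_of_nonneg_left (Real.abs_cos_le_one S) (by positivity)
        _ = S⁻¹ := mul_one _
  have h2 : Tendsto (fun S : ℝ => ∫ x in π..S, (x^2)⁻¹ * Real.cos x) atTop (nhds G) :=
    MeasureTheory.intervalIntegral_tendsto_integral_Ioi π cos_div_sq_integrable tendsto_id
  have h3 : Tendsto (fun S : ℝ => Fπ + (S⁻¹ * (-Real.cos S) - π⁻¹ * (-Real.cos π)
      - ∫ x in π..S, (x^2)⁻¹ * Real.cos x)) atTop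
      (nhds (Fπ + (0 - π⁻¹ * (-Real.cos π) - G))) :=
    tendsto_const_nhds.add ((h1.sub tendsto_const_nhds).sub h2)
  have heq : (Fπ + (0 - π⁻¹ * (-Real.cos π) - G)) = Fπ + π⁻¹ * Real.cos π - G := by ring
  rw [heq] at h3
  apply h3.congr'
  filter_upwards [eventually_ge_atTop π] with S hS
  exact (key S hS).symm



lemma dirichlet :
    Tendsto (fun S : ℝ => ∫ u in (0:ℝ)..S, Real.sin u / u) atTop (nhds (π/2)) := by
  obtain ⟨L, hL⟩ := dirichlet_limit_exists
  have hs : Tendsto (fun n : ℕ => ((n:ℝ) + 1/2) * π) atTop atTop := by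
    apply Tendsto.atTop_mul_const Real.pi_pos
    exact tendsto_atTop_add_const_right _ _ tendsto_natCast_atTop_atTop
  have hLseq := hL.comp hs
  have hPiSeq : Tendsto (fun n : ℕ => ∫ u in (0:ℝ)..(((n:ℝ) + 1/2) * π), Real.sin u / u)
      atTop (nhds (π/2)) := by
    have heq : ∀ n : ℕ, (∫ u in (0:ℝ)..(((n:ℝ) + 1/2) * π), Real.sin u / u)
        = π/2 + ∫ t in Set.Ioc (0:ℝ) π, Real.sin (((n:ℝ) + 1/2) * t) * phi t := by
      intro n
      rw [← step1 (by positivity : (0:ℝ) < (n:ℝ) + 1/2), step2]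
    simp only [heq]
    simpa using (tendsto_const_nhds (x := π/2)).add tendsto_RL
  have : L = π/2 := tendsto_nhds_unique hLseq hPiSeq
  rwa [this] at hL

theorem integral_sin_cube_div_eq_pi_div_six :
    Tendsto (fun T : ℝ => ∫ τ in (0 : ℝ)..T, Real.sin (τ ^ 3 / 3) / τ)
      atTop (nhds (π / 6)) := by
  have hsub : ∀ T : ℝ, (∫ τ in (0 : ℝ)..T, Real.sin (τ ^ 3 / 3) / τ)
      = (1/3) * ∫ u in (0:ℝ)..(T^3/3), Real.sin u / u := by
    intro T
    have hderiv : ∀ x ∈ Set.uIcc (0:ℝ) T, HasDerivAt (fun y : ℝ => y^3/3) (x^2) x := by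
      intro x _
      have := (hasDerivAt_pow 3 x).div_const 3
      exact this.congr_deriv (by norm_num)
    have hcomp : (∫ x in (0:ℝ)..T, (x^2) • msinc (x^3/3))
        = ∫ u in ((0:ℝ)^3/3)..(T^3/3), msinc u := by
      exact intervalIntegral.integral_comp_smul_deriv hderiv
        (by fun_prop : Continuous fun x : ℝ => x^2).continuousOn msinc_cont
    have e1 : (∫ τ in (0 : ℝ)..T, Real.sin (τ ^ 3 / 3) / τ)
        = (1/3) * ∫ x in (0:ℝ)..T, (x^2) • msinc (x^3/3) := by
      rw [← intervalIntegral.integral_const_mul]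
      apply intervalIntegral.integral_congr
      intro x _
      rcases eq_or_ne x 0 with rfl | hx
      · simp [msinc]
      · have hx3 : x^3/3 ≠ 0 := by
          simp only [div_ne_zero_iff]
          exact ⟨pow_ne_zero 3 hx, by norm_num⟩
        simp only [msinc, hx3, if_neg, ↓reduceIte, smul_eq_mul]
        field_simp
    have e2 : (∫ u in ((0:ℝ)^3/3)..(T^3/3), msinc u)
        = ∫ u in (0:ℝ)..(T^3/3), Real.sin u / u := by
      norm_num
      apply intervalIntegral.integral_congr_ae
      have h0 : ∀ᵐ (y : ℝ), y ≠ 0 := by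
        rw [ae_iff]
        simpa using Real.volume_singleton (0:ℝ)
      filter_upwards [h0] with y hy _
      simp [msinc, hy]
    rw [e1, hcomp, e2]
  simp only [hsub]
  have hT3 : Tendsto (fun T : ℝ => T^3/3) atTop atTop :=
    (tendsto_pow_atTop (by norm_num : 3 ≠ 0)).atTop_div_const (by norm_num)
  have hgoal := (dirichlet.comp hT3).const_mul (1/3 : ℝ)
  rw [show (1/3 : ℝ) * (π/2) = π/6 from by ring] at hgoal
  simpa only [Function.comp_def] using hgoal
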